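/- Let m = 2k + l with k >= 1 and l in {1,2}, and let W be the dihedral Coxeter group I_2(m) with generators s_1, s_2. Let x_J be the sum in Q[W] of the minimal-length left coset representatives of the subgroup generated by s_2, and x_∅ the sum of all elements of W. Then x_J^2 = l*x_J + k*x_∅, and consequently x_∅ = (-l/k)*x_J + (1/k)*x_J^2 lies in Q[x_J]; the set {1, x_J, x_∅} is a basis of Q[x_J] contained in the standard descent algebra basis. -/

import Mathlib

open scoped Classical

set_option synthInstance.maxHeartbeats 1000000
set_option maxHeartbeats 1000000
set_option linter.unusedSectionVars false
set_option linter.unreachableTactic false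
set_option linter.unusedTactic false

/-- For a finite Coxeter system `cs` and a set `J` of simple indices, `xCox cs J` is the
sum, in the group algebra `ℚ[W]`, of the minimal-length left coset representatives of the
standard parabolic subgroup `W_J`, namely the `w ∈ W` with `ℓ(w s) > ℓ(w)` for all
simple reflections `s` indexed by `J`.  In particular `xCox cs ∅` is the sum of all
elements of `W`. -/
noncomputable def xCox {B W : Type*} [Group W] [Fintype W] {M : CoxeterMatrix B}
    (cs : CoxeterSystem M W) (J : Set B) : MonoidAlgebra ℚ W :=
  ∑ w ∈ Finset.univ.filter
      (fun w : W => ∀ t ∈ J, cs.length w < cs.length (w * cs.simple t)),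
    MonoidAlgebra.single w 1





namespace DNB

open CoxeterSystem DihedralGroup

variable {W : Type*} [Group W] {M : CoxeterMatrix (Fin 2)} (cs : CoxeterSystem M W) (m : ℕ)

noncomputable def aa (n : ℕ) : W := cs.wordProd (CoxeterSystem.alternatingWord 1 0 n)
noncomputable def bb (n : ℕ) : W := cs.wordProd (CoxeterSystem.alternatingWord 0 1 n)

noncomputable def tt : W := cs.simple 0
noncomputable def qq : W := cs.simple 1 * cs.simple 0

lemma hM10 (hM : M 0 1 = m) : M 1 0 = m := by rw [M.symmetric]; exact hM

lemma hqm (hM : M 0 1 = m) : (qq cs) ^ m = 1 := by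
  rw [qq, ← hM10 m hM]
  exact cs.simple_mul_simple_pow 1 0

lemma htt : (tt cs) * tt cs = 1 := cs.simple_mul_simple_self 0

lemma hqtq : qq cs * tt cs * qq cs = tt cs := by
  simp only [qq, tt, mul_assoc, simple_mul_simple_cancel_left]

lemma hqctqc : ∀ c : ℕ, (qq cs) ^ c * tt cs * (qq cs) ^ c = tt cs := by
  intro c
  induction c with
  | zero => simp
  | succ c ih =>
    calc (qq cs) ^ (c+1) * tt cs * (qq cs) ^ (c+1)
        = qq cs * ((qq cs) ^ c * tt cs * (qq cs) ^ c) * qq cs := by group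
      _ = tt cs := by rw [ih]; exact hqtq cs

lemma hqct (hM : M 0 1 = m) {c : ℕ} (hc : c ≤ m) :
    (qq cs) ^ c * tt cs = tt cs * (qq cs) ^ (m - c) := by
  have h := hqctqc cs c
  have hsplit : (qq cs) ^ c * (qq cs) ^ (m - c) = 1 := by
    rw [← pow_add]
    have hcm : c + (m - c) = m := by omega
    rw [hcm]; exact hqm cs m hM
  calc (qq cs) ^ c * tt cs
      = (qq cs) ^ c * tt cs * ((qq cs) ^ c * (qq cs) ^ (m-c)) := by rw [hsplit, mul_one]
    _ = ((qq cs) ^ c * tt cs * (qq cs) ^ c) * (qq cs) ^ (m-c) := by simp [mul_assoc]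
    _ = tt cs * (qq cs) ^ (m - c) := by rw [h]

noncomputable def phi (hM : M 0 1 = m) : W →* DihedralGroup m :=
  cs.lift ⟨![DihedralGroup.sr 0, DihedralGroup.sr 1], id (α := M.IsLiftable _) (by
    intro i i'
    fin_cases i <;> fin_cases i'
    · show ((sr 0 : DihedralGroup m) * sr 0) ^ (M 0 0) = 1
      rw [M.diagonal 0, pow_one, sr_mul_sr, sub_self]; rfl
    · show ((sr 0 : DihedralGroup m) * sr 1) ^ (M 0 1) = 1
      rw [hM, sr_mul_sr]
      have h1 : (1 : ZMod m) - 0 = 1 := by ring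
      rw [h1, DihedralGroup.r_one_pow_n]
    · show ((sr 1 : DihedralGroup m) * sr 0) ^ (M 1 0) = 1
      rw [hM10 m hM, sr_mul_sr]
      have h1 : (0 : ZMod m) - 1 = -1 := by ring
      rw [h1]
      have hinv : (DihedralGroup.r (-1) : DihedralGroup m) = (DihedralGroup.r 1)⁻¹ := by
        apply eq_inv_of_mul_eq_one_right
        rw [DihedralGroup.r_mul_r]
        have h2 : (1 : ZMod m) + -1 = 0 := by ring
        rw [h2]; rfl
      rw [hinv, inv_pow, DihedralGroup.r_one_pow_n, inv_one]
    · show ((sr 1 : DihedralGroup m) * sr 1) ^ (M 1 1) = 1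
      rw [M.diagonal 1, pow_one, sr_mul_sr, sub_self]; rfl)⟩

lemma phi_t (hM : M 0 1 = m) : phi cs m hM (tt cs) = sr 0 := by
  rw [tt, phi, cs.lift_apply_simple]
  rfl

lemma phi_q (hM : M 0 1 = m) : phi cs m hM (qq cs) = r (-1) := by
  rw [qq, map_mul, phi, cs.lift_apply_simple, cs.lift_apply_simple]
  show (sr 1 * sr 0 : DihedralGroup m) = r (-1)
  rw [sr_mul_sr]
  norm_num

lemma r_neg_one_pow (c : ℕ) : (r (-1) : DihedralGroup m) ^ c = r (-(c : ZMod m)) := by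
  have h1 : (r (-1) : DihedralGroup m) = (r 1)⁻¹ := by
    apply eq_inv_of_mul_eq_one_right
    rw [DihedralGroup.r_mul_r]
    have h2 : (1 : ZMod m) + -1 = 0 := by ring
    rw [h2]; rfl
  rw [h1, inv_pow, DihedralGroup.r_one_pow]
  symm
  apply eq_inv_of_mul_eq_one_right
  rw [DihedralGroup.r_mul_r]
  have h3 : ((c:ℕ) : ZMod m) + -(c : ZMod m) = 0 := by ring
  rw [h3]; rfl

lemma phi_qc (hM : M 0 1 = m) (c : ℕ) :
    phi cs m hM ((qq cs) ^ c) = r (-(c : ZMod m)) := by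
  rw [map_pow, phi_q, r_neg_one_pow]

lemma phi_tqc (hM : M 0 1 = m) (c : ℕ) :
    phi cs m hM (tt cs * (qq cs) ^ c) = sr (-(c : ZMod m)) := by
  rw [map_mul, phi_t, phi_qc, sr_mul_r, zero_add]

end DNB
-- part 2: injectivity and generation (appended to p1 contents when testing)
namespace DNB
open CoxeterSystem DihedralGroup

variable {W : Type*} [Group W] {M : CoxeterMatrix (Fin 2)} (cs : CoxeterSystem M W) (m : ℕ)

section inj
variable (hM : M 0 1 = m)
include hM

omit hM in
lemma cast_inj_of_lt {c d : ℕ} (hc : c < m) (hd : d < m) (h : (c : ZMod m) = d) : c = d := by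
  have := congrArg ZMod.val h
  rwa [ZMod.val_cast_of_lt hc, ZMod.val_cast_of_lt hd] at this

lemma inj_qq {c d : ℕ} (hc : c < m) (hd : d < m) (h : (qq cs)^c = (qq cs)^d) : c = d := by
  have h2 := congrArg (phi cs m hM) h
  rw [phi_qc cs m hM, phi_qc cs m hM] at h2
  simp only [r.injEq, neg_inj] at h2
  exact cast_inj_of_lt m hc hd h2

lemma ne_q_tq (c d : ℕ) : (qq cs)^c ≠ tt cs * (qq cs)^d := by
  intro h
  have h2 := congrArg (phi cs m hM) h
  rw [phi_qc cs m hM, phi_tqc cs m hM] at h2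
  simp at h2

lemma inj_tqq {c d : ℕ} (hc : c < m) (hd : d < m)
    (h : tt cs * (qq cs)^c = tt cs * (qq cs)^d) : c = d :=
  inj_qq cs m hM hc hd (mul_left_cancel h)

lemma norm_exp (hm0 : 0 < m) (e : ℕ) : ∃ c, c < m ∧ (qq cs)^e = (qq cs)^c := by
  refine ⟨e % m, Nat.mod_lt e hm0, ?_⟩
  conv_lhs => rw [← Nat.div_add_mod e m]
  rw [pow_add, pow_mul, hqm cs m hM, one_pow, one_mul]

lemma gen (hm0 : 0 < m) (w : W) : ∃ c, c < m ∧ (w = (qq cs)^c ∨ w = tt cs * (qq cs)^c) := by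
  obtain ⟨ω, rfl⟩ := cs.wordProd_surjective w
  induction ω with
  | nil =>
    exact ⟨0, hm0, Or.inl (by rw [cs.wordProd_nil, pow_zero])⟩
  | cons i ω ih =>
    obtain ⟨c, hc, hcase⟩ := ih
    rw [cs.wordProd_cons]
    have hs1 : cs.simple 1 = tt cs * (qq cs)^(m-1) := by
      have h1 : (qq cs)^1 * tt cs = tt cs * (qq cs)^(m-1) := hqct cs m hM (by omega)
      rw [pow_one] at h1
      rw [← h1, qq, tt, mul_assoc, simple_mul_simple_self, mul_one]
    fin_cases i
    · -- i = 0 : s 0 = tt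
      rcases hcase with h | h
      · exact ⟨c, hc, Or.inr (by rw [h]; rfl)⟩
      · refine ⟨c, hc, Or.inl ?_⟩
        rw [h, ← mul_assoc]
        show cs.simple 0 * tt cs * (qq cs)^c = (qq cs)^c
        rw [tt, simple_mul_simple_self, one_mul]
    · -- i = 1
      rcases hcase with h | h
      · obtain ⟨c', hc', he⟩ := norm_exp cs m hM hm0 (m - 1 + c)
        refine ⟨c', hc', Or.inr ?_⟩
        rw [h]
        show cs.simple 1 * (qq cs)^c = tt cs * (qq cs)^c'
        rw [hs1, mul_assoc, ← pow_add, he]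
      · obtain ⟨c', hc', he⟩ := norm_exp cs m hM hm0 (c + 1)
        refine ⟨c', hc', Or.inl ?_⟩
        rw [h]
        show cs.simple 1 * (tt cs * (qq cs)^c) = (qq cs)^c'
        have hq1 : cs.simple 1 * tt cs = qq cs := by rw [qq, tt]
        rw [← mul_assoc, hq1, ← pow_succ', he]

end inj
end DNB
namespace DNB
open CoxeterSystem DihedralGroup

variable {W : Type*} [Group W] {M : CoxeterMatrix (Fin 2)} (cs : CoxeterSystem M W) (m : ℕ)

lemma fin2 (i : Fin 2) : i = 0 ∨ i = 1 := by
  fin_cases i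
  · exact Or.inl rfl
  · exact Or.inr rfl

lemma aa0 : aa cs 0 = 1 := by
  rw [aa, show CoxeterSystem.alternatingWord (1 : Fin 2) 0 0 = [] from rfl, cs.wordProd_nil]

lemma bb0 : bb cs 0 = 1 := by
  rw [bb, show CoxeterSystem.alternatingWord (0 : Fin 2) 1 0 = [] from rfl, cs.wordProd_nil]

lemma aa_succ (n : ℕ) : aa cs (n+1) = bb cs n * cs.simple 0 := by
  rw [aa, bb, CoxeterSystem.alternatingWord_succ, cs.wordProd_concat]

lemma bb_succ (n : ℕ) : bb cs (n+1) = aa cs n * cs.simple 1 := by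
  rw [aa, bb, CoxeterSystem.alternatingWord_succ, cs.wordProd_concat]

lemma aa_even (c : ℕ) : aa cs (2*c) = (qq cs)^c := by
  rw [aa, cs.prod_alternatingWord_eq_mul_pow, if_pos (even_two_mul c), one_mul,
    Nat.mul_div_cancel_left c (by norm_num)]
  rfl

lemma aa_odd (c : ℕ) : aa cs (2*c+1) = tt cs * (qq cs)^c := by
  have hne : ¬ Even (2*c+1) := by simp [Nat.even_add_one, parity_simps]
  rw [aa, cs.prod_alternatingWord_eq_mul_pow, if_neg hne]
  have hd : (2*c+1)/2 = c := by omega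
  rw [hd]
  rfl

lemma bb_even (c : ℕ) : bb cs (2*c) = (cs.simple 0 * cs.simple 1)^c := by
  rw [bb, cs.prod_alternatingWord_eq_mul_pow, if_pos (even_two_mul c), one_mul,
    Nat.mul_div_cancel_left c (by norm_num)]

lemma bb_odd (c : ℕ) : bb cs (2*c+1) = cs.simple 1 * (cs.simple 0 * cs.simple 1)^c := by
  have hne : ¬ Even (2*c+1) := by simp [Nat.even_add_one, parity_simps]
  rw [bb, cs.prod_alternatingWord_eq_mul_pow, if_neg hne]
  have hd : (2*c+1)/2 = c := by omega
  rw [hd]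

lemma len_aa_le (n : ℕ) : cs.length (aa cs n) ≤ n := by
  rw [aa]
  have := cs.length_wordProd_le (CoxeterSystem.alternatingWord 1 0 n)
  rwa [CoxeterSystem.length_alternatingWord] at this

lemma len_bb_le (n : ℕ) : cs.length (bb cs n) ≤ n := by
  rw [bb]
  have := cs.length_wordProd_le (CoxeterSystem.alternatingWord 0 1 n)
  rwa [CoxeterSystem.length_alternatingWord] at this

lemma classify : ∀ n : ℕ, ∀ w : W, cs.length w = n → w = aa cs n ∨ w = bb cs n := by
  intro n
  induction n using Nat.strong_induction_on with
  | _ n ih =>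
    intro w hw
    rcases eq_or_ne w 1 with rfl | hne
    · have h0 : n = 0 := by rw [← hw, cs.length_one]
      subst h0
      left; rw [aa0]
    · obtain ⟨i, hi⟩ := cs.exists_rightDescent_of_ne_one hne
      have hlen : cs.length (w * cs.simple i) + 1 = cs.length w := cs.isRightDescent_iff.mp hi
      have hn : n = cs.length (w * cs.simple i) + 1 := by omega
      have hcl := ih (cs.length (w * cs.simple i)) (by omega) (w * cs.simple i) rfl
      have hw' : (w * cs.simple i) * cs.simple i = w := cs.simple_mul_simple_cancel_right i
      set n' := cs.length (w * cs.simple i) with hn'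
      rcases fin2 i with rfl | rfl
      · rcases hcl with h | h
        · rcases Nat.eq_zero_or_pos n' with h0 | hpos
          · left
            rw [hn, h0, ← hw', h, h0, aa0, ← bb0 cs, ← aa_succ]
          · exfalso
            obtain ⟨j, hj⟩ : ∃ j, n' = j + 1 := ⟨n' - 1, by omega⟩
            have hwbj : w = bb cs j := by
              rw [← hw', h, hj, aa_succ, cs.simple_mul_simple_cancel_right]
            have hle := len_bb_le cs j
            rw [← hwbj] at hle
            omega
        · left
          rw [hn, aa_succ, ← h, hw']
      · rcases hcl with h | h
        · right
          rw [hn, bb_succ, ← h, hw']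
        · rcases Nat.eq_zero_or_pos n' with h0 | hpos
          · right
            rw [hn, h0, ← hw', h, h0, bb0, ← aa0 cs, ← bb_succ]
          · exfalso
            obtain ⟨j, hj⟩ : ∃ j, n' = j + 1 := ⟨n' - 1, by omega⟩
            have hwbj : w = aa cs j := by
              rw [← hw', h, hj, bb_succ, cs.simple_mul_simple_cancel_right]
            have hle := len_aa_le cs j
            rw [← hwbj] at hle
            omega

section withM

variable (hM : M 0 1 = m) (hm3 : 3 ≤ m)
include hM hm3

lemma len_le_m (w : W) : cs.length w ≤ m := by
  by_contra hcon
  rcases classify cs (cs.length w) w rfl with h | h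
  · have h1 : M.M 1 0 ≠ 0 := by rw [hM10 m hM]; omega
    have h2 : cs.length w > M.M 1 0 := by rw [hM10 m hM]; omega
    have hred : cs.IsReduced (CoxeterSystem.alternatingWord 1 0 (cs.length w)) := by
      show cs.length (cs.wordProd _) = _
      rw [CoxeterSystem.length_alternatingWord, ← aa, ← h]
    exact cs.not_isReduced_alternatingWord 1 0 h1 h2 hred
  · have h1 : M.M 0 1 ≠ 0 := by rw [hM]; omega
    have h2 : cs.length w > M.M 0 1 := by rw [hM]; omega
    have hred : cs.IsReduced (CoxeterSystem.alternatingWord 0 1 (cs.length w)) := by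
      show cs.length (cs.wordProd _) = _
      rw [CoxeterSystem.length_alternatingWord, ← bb, ← h]
    exact cs.not_isReduced_alternatingWord 0 1 h1 h2 hred

omit hM hm3 in
lemma dvd_bound {s : ℕ} (hdvd : m ∣ s) (hs : s ≤ m) : s = 0 ∨ s = m := by
  rcases Nat.lt_or_ge s m with h | h
  · exact Or.inl (Nat.eq_zero_of_dvd_of_lt hdvd h)
  · omega

-- phi values on the "b side"
omit hm3 in
lemma phi_pp (c : ℕ) : phi cs m hM ((cs.simple 0 * cs.simple 1)^c) = r (c : ZMod m) := by
  rw [map_pow, map_mul, phi, cs.lift_apply_simple, cs.lift_apply_simple]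
  show ((sr 0 * sr 1 : DihedralGroup m))^c = _
  rw [sr_mul_sr]
  have h1 : (1 : ZMod m) - 0 = 1 := by ring
  rw [h1, DihedralGroup.r_one_pow]

omit hm3 in
lemma phi_spp (c : ℕ) :
    phi cs m hM (cs.simple 1 * (cs.simple 0 * cs.simple 1)^c) = sr (1 + (c : ZMod m)) := by
  rw [map_mul, phi_pp cs m hM]
  have h1 : phi cs m hM (cs.simple 1) = sr 1 := by rw [phi, cs.lift_apply_simple]; rfl
  rw [h1, sr_mul_r]

lemma comp_aa {n j : ℕ} (hn : n ≤ m) (hj : j ≤ m) (h : aa cs n = aa cs j) : n = j := by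
  rcases Nat.even_or_odd n with ⟨c, hc⟩ | ⟨c, hc⟩ <;> rcases Nat.even_or_odd j with ⟨d, hd⟩ | ⟨d, hd⟩ <;>
    subst hc <;> subst hd
  · rw [show c + c = 2*c by ring, show d + d = 2*d by ring, aa_even, aa_even] at h
    have := inj_qq cs m hM (by omega) (by omega) h
    omega
  · rw [show c + c = 2*c by ring, aa_even, aa_odd] at h
    exact absurd h (ne_q_tq cs m hM c d)
  · rw [show d + d = 2*d by ring, aa_even, aa_odd] at h
    exact absurd h.symm (ne_q_tq cs m hM d c)
  · rw [aa_odd, aa_odd] at h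
    have := inj_tqq cs m hM (by omega) (by omega) h
    omega

lemma comp_bb {n j : ℕ} (hn : n ≤ m) (hj : j ≤ m) (h : bb cs n = bb cs j) : n = j := by
  rcases Nat.even_or_odd n with ⟨c, hc⟩ | ⟨c, hc⟩ <;> rcases Nat.even_or_odd j with ⟨d, hd⟩ | ⟨d, hd⟩ <;>
    subst hc <;> subst hd
  · rw [show c + c = 2*c by ring, show d + d = 2*d by ring, bb_even, bb_even] at h
    have h2 := congrArg (phi cs m hM) h
    rw [phi_pp cs m hM, phi_pp cs m hM] at h2
    simp only [r.injEq] at h2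
    have := cast_inj_of_lt m (c := c) (d := d) (by omega) (by omega) h2
    omega
  · rw [show c + c = 2*c by ring, bb_even, bb_odd] at h
    have h2 := congrArg (phi cs m hM) h
    rw [phi_pp cs m hM, phi_spp cs m hM] at h2
    simp at h2
  · rw [show d + d = 2*d by ring, bb_even, bb_odd] at h
    have h2 := congrArg (phi cs m hM) h
    rw [phi_pp cs m hM, phi_spp cs m hM] at h2
    simp at h2
  · rw [bb_odd, bb_odd] at h
    have h2 := congrArg (phi cs m hM) h
    rw [phi_spp cs m hM, phi_spp cs m hM] at h2
    simp only [sr.injEq, add_right_inj] at h2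
    have := cast_inj_of_lt m (c := c) (d := d) (by omega) (by omega) h2
    omega

lemma comp_ab {n j : ℕ} (hn : n ≤ m) (hj : j ≤ m) (h : aa cs n = bb cs j) :
    n = j ∧ (n = 0 ∨ n = m) := by
  rcases Nat.even_or_odd n with ⟨c, hc⟩ | ⟨c, hc⟩ <;> rcases Nat.even_or_odd j with ⟨d, hd⟩ | ⟨d, hd⟩ <;>
    subst hc <;> subst hd
  · rw [show c + c = 2*c by ring, show d + d = 2*d by ring, aa_even, bb_even] at h
    have h2 := congrArg (phi cs m hM) h
    rw [phi_qc cs m hM, phi_pp cs m hM] at h2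
    simp only [r.injEq] at h2
    have h0 : ((c + d : ℕ) : ZMod m) = 0 := by push_cast; rw [← h2]; ring
    have hdvd : m ∣ c + d := (ZMod.natCast_eq_zero_iff _ _).mp h0
    rcases dvd_bound m hdvd (by omega) with h' | h' <;> omega
  · rw [show c + c = 2*c by ring, aa_even, bb_odd] at h
    have h2 := congrArg (phi cs m hM) h
    rw [phi_qc cs m hM, phi_spp cs m hM] at h2
    simp at h2
  · rw [show d + d = 2*d by ring, aa_odd, bb_even] at h
    have h2 := congrArg (phi cs m hM) h
    rw [phi_tqc cs m hM, phi_pp cs m hM] at h2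
    simp at h2
  · rw [aa_odd, bb_odd] at h
    have h2 := congrArg (phi cs m hM) h
    rw [phi_tqc cs m hM, phi_spp cs m hM] at h2
    simp only [sr.injEq] at h2
    have h0 : ((c + d + 1 : ℕ) : ZMod m) = 0 := by push_cast; linear_combination -h2
    have hdvd : m ∣ c + d + 1 := (ZMod.natCast_eq_zero_iff _ _).mp h0
    rcases dvd_bound m hdvd (by omega) with h' | h' <;> omega

lemma len_aa {n : ℕ} (hn : n ≤ m) : cs.length (aa cs n) = n := by
  have hle := len_aa_le cs n
  rcases classify cs (cs.length (aa cs n)) (aa cs n) rfl with h | h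
  · exact (comp_aa cs m hM hm3 hn (by omega) h).symm
  · exact ((comp_ab cs m hM hm3 hn (by omega) h).1).symm

lemma len_bb {n : ℕ} (hn : n ≤ m) : cs.length (bb cs n) = n := by
  have hle := len_bb_le cs n
  rcases classify cs (cs.length (bb cs n)) (bb cs n) rfl with h | h
  · exact (comp_ab cs m hM hm3 (by omega) hn h.symm).1
  · exact (comp_bb cs m hM hm3 hn (by omega) h).symm

lemma braid : aa cs m = bb cs m := by
  rw [aa, bb]
  have hle : m ≤ M 1 0 * 2 := by rw [hM10 m hM]; omega
  have := cs.prod_alternatingWord_eq_prod_alternatingWord_sub 1 0 m hle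
  rwa [show M 1 0 * 2 - m = m by rw [hM10 m hM]; omega] at this

lemma mem_X_iff (w : W) :
    (cs.length w < cs.length (w * cs.simple 1)) ↔ ∃ n, n < m ∧ w = aa cs n := by
  have hn : cs.length w ≤ m := len_le_m cs m hM hm3 w
  rcases classify cs (cs.length w) w rfl with h | h
  · by_cases hnm : cs.length w < m
    · refine iff_of_true ?_ ⟨cs.length w, hnm, h⟩
      have hws : w * cs.simple 1 = bb cs (cs.length w + 1) := by rw [bb_succ, ← h]
      rw [hws, len_bb cs m hM hm3 (by omega)]
      omega
    · have hwm : cs.length w = m := by omega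
      refine iff_of_false ?_ ?_
      · have hws : w * cs.simple 1 = aa cs (m - 1) := by
          have hb : bb cs ((m-1)+1) = aa cs (m-1) * cs.simple 1 := bb_succ cs (m-1)
          rw [show m - 1 + 1 = m by omega] at hb
          rw [h, hwm, braid cs m hM hm3, hb, cs.simple_mul_simple_cancel_right]
        rw [hws, len_aa cs m hM hm3 (by omega), hwm]
        omega
      · rintro ⟨n', hn', he⟩
        rw [hwm] at h
        have := comp_aa cs m hM hm3 (le_refl m) (le_of_lt (lt_of_lt_of_le hn' (le_refl m))) (h.symm.trans he)
        omega
  · rcases Nat.eq_zero_or_pos (cs.length w) with h0 | hpos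
    · rw [h0] at h
      refine iff_of_true ?_ ⟨0, by omega, by rw [h, bb0, aa0]⟩
      have hws : w * cs.simple 1 = bb cs 1 := by
        rw [bb_succ, aa0, h, bb0]
      rw [hws, len_bb cs m hM hm3 (by omega), h0]
      omega
    · obtain ⟨j, hj⟩ : ∃ j, cs.length w = j + 1 := ⟨cs.length w - 1, by omega⟩
      rw [hj] at h
      refine iff_of_false ?_ ?_
      · have hws : w * cs.simple 1 = aa cs j := by
          rw [h, bb_succ, cs.simple_mul_simple_cancel_right]
        rw [hws, len_aa cs m hM hm3 (by omega), hj]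
        omega
      · rintro ⟨n', hn', he⟩
        have hcomp := comp_ab cs m hM hm3 (by omega) (by omega) (he.symm.trans h)
        omega

end withM
end DNB
namespace DNB
open Polynomial Finset

noncomputable def pG (n : ℕ) : ℚ[X] := ∑ c ∈ Finset.range n, X^c
noncomputable def pD (N : ℕ) : ℚ[X] := ∑ j ∈ Finset.range N, pG (j+1)

lemma pG_mul (n : ℕ) : (X - 1) * pG n = X^n - 1 := by
  rw [pG, mul_comm]; exact geom_sum_mul X n

lemma pD_mul (N : ℕ) : (X-1)^2 * pD N = X*(X^N - 1) - (N : ℚ[X])*(X-1) := by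
  rw [pD, Finset.mul_sum]
  rw [Finset.sum_congr rfl (fun j _ => by rw [pow_two, mul_assoc, pG_mul] :
    ∀ j ∈ range N, ((X:ℚ[X])-1)^2 * pG (j+1) = (X-1)*(X^(j+1) - 1))]
  rw [← Finset.mul_sum]
  have h2 : ∑ j ∈ range N, ((X:ℚ[X])^(j+1) - 1) = X * pG N - (N : ℚ[X]) := by
    rw [Finset.sum_sub_distrib, Finset.sum_const, Finset.card_range, pG, Finset.mul_sum]
    congr 1
    · exact Finset.sum_congr rfl (fun j _ => pow_succ' X j)
    · simp [nsmul_eq_mul]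
  rw [h2, mul_sub, ← mul_assoc, (by ring : ((X:ℚ[X]) - 1)*X = X*(X-1)), mul_assoc, pG_mul]
  ring

lemma hXne : (X - 1 : ℚ[X]) ≠ 0 := by
  intro hcon
  have := congrArg (Polynomial.eval 0) hcon
  simp at this

lemma polyA1 (k : ℕ) :
    pG (k+1) * pG (k+1) + X^(k+2) * (pG k * pG k)
      = pG (k+1) + (k : ℚ[X]) * pG (2*k+1) + (X^(2*k+1) - 1) * pD k := by
  apply mul_left_cancel₀ (pow_ne_zero 2 hXne)
  have hGA := pG_mul (k+1)
  have hGB := pG_mul k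
  have hGQ := pG_mul (2*k+1)
  have hD := pD_mul k
  linear_combination ((X-1)*pG (k+1) + X^(k+1) - 1 - (X-1)) * hGA
    + (X^(k+2)*((X-1)*pG k + X^k - 1)) * hGB
    - (k:ℚ[X])*(X-1)*hGQ - (X^(2*k+1)-1)*hD

lemma polyA2 (k : ℕ) :
    pG (k+1) * pG (k+1) + X^(k+2) * (pG (k+1) * pG (k+1))
      = 2 * pG (k+1) + (k : ℚ[X]) * pG (2*k+2) + (X^(2*k+2) - 1) * pD (k+1) := by
  apply mul_left_cancel₀ (pow_ne_zero 2 hXne)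
  have hGA := pG_mul (k+1)
  have hGQ := pG_mul (2*k+2)
  have hD := pD_mul (k+1)
  linear_combination (norm := (push_cast; ring)) ((X-1)*pG (k+1) + X^(k+1) - 1 - 2*(X-1) + X^(k+2)*((X-1)*pG (k+1) + X^(k+1) - 1)) * hGA
    - (k:ℚ[X])*(X-1)*hGQ - (X^(2*k+2)-1)*hD

lemma polyB1 (k : ℕ) :
    (X^(k+1) + 1) * (pG (k+1) * pG k)
      = pG k + (k : ℚ[X]) * pG (2*k+1) + (X^(2*k+1) - 1) * pD k := by
  apply mul_left_cancel₀ (pow_ne_zero 2 hXne)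
  have hGA := pG_mul (k+1)
  have hGB := pG_mul k
  have hGQ := pG_mul (2*k+1)
  have hD := pD_mul k
  linear_combination ((X^(k+1)+1)*(X^k-1)) * hGA
    + ((X^(k+1)+1)*((X-1)*pG (k+1)) - (X-1)) * hGB
    - (k:ℚ[X])*(X-1)*hGQ - (X^(2*k+1)-1)*hD

lemma polyB2 (k : ℕ) :
    (X^(k+2) + 1) * (pG (k+1) * pG (k+1))
      = 2 * pG (k+1) + (k : ℚ[X]) * pG (2*k+2) + (X^(2*k+2) - 1) * pD (k+1) := by
  apply mul_left_cancel₀ (pow_ne_zero 2 hXne)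
  have hGA := pG_mul (k+1)
  have hGQ := pG_mul (2*k+2)
  have hD := pD_mul (k+1)
  linear_combination (norm := (push_cast; ring)) ((X^(k+2)+1)*(X^(k+1)-1) + (X^(k+2)+1)*((X-1)*pG (k+1)) - 2*(X-1)) * hGA
    - (k:ℚ[X])*(X-1)*hGQ - (X^(2*k+2)-1)*hD

end DNB
namespace DNB
open CoxeterSystem DihedralGroup Finset Polynomial

variable {W : Type*} [Group W] {M : CoxeterMatrix (Fin 2)} (cs : CoxeterSystem M W) (m : ℕ)

noncomputable def zz : MonoidAlgebra ℚ W := MonoidAlgebra.single (qq cs) 1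
noncomputable def TT : MonoidAlgebra ℚ W := MonoidAlgebra.single (tt cs) 1

lemma zz_pow (c : ℕ) : (zz cs)^c = MonoidAlgebra.single ((qq cs)^c) 1 := by
  rw [zz, MonoidAlgebra.single_pow, one_pow]

lemma TT_mul_TT : TT cs * TT cs = 1 := by
  rw [TT, MonoidAlgebra.single_mul_single, htt cs, one_mul]
  exact (MonoidAlgebra.one_def).symm

lemma zz_m (hM : M 0 1 = m) : (zz cs)^m = 1 := by
  rw [zz_pow, hqm cs m hM]
  exact (MonoidAlgebra.one_def).symm

lemma aeval_pG (n : ℕ) :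
    Polynomial.aeval (zz cs) (pG n) = ∑ c ∈ range n, (zz cs)^c := by
  rw [pG, map_sum]
  exact Finset.sum_congr rfl (fun c _ => by rw [map_pow, Polynomial.aeval_X])

lemma parity_split {A : Type*} [AddCommMonoid A] (f : ℕ → A) (N : ℕ) :
    ∑ n ∈ range N, f n
      = ∑ c ∈ range ((N+1)/2), f (2*c) + ∑ c ∈ range (N/2), f (2*c+1) := by
  induction N with
  | zero => simp
  | succ N ih =>
    rw [Finset.sum_range_succ, ih]
    rcases Nat.even_or_odd N with ⟨c, hc⟩ | ⟨c, hc⟩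
    · subst hc
      rw [show (c+c+1+1)/2 = c+1 from by omega, show (c+c+1)/2 = c from by omega,
        show (c+c)/2 = c from by omega, show c+c = 2*c from by ring,
        Finset.sum_range_succ (fun c' => f (2*c')) c]
      abel
    · subst hc
      rw [show (2*c+1+1+1)/2 = c+1 from by omega, show (2*c+1+1)/2 = c+1 from by omega,
        show (2*c+1)/2 = c from by omega,
        Finset.sum_range_succ (fun c' => f (2*c'+1)) c]
      abel

section main
variable (k l : ℕ) (hM : M 0 1 = m)
include hM

lemma algA (hl : l = 1 ∨ l = 2) (hm : m = 2*k+l) :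
    (∑ c ∈ range (k+1), (zz cs)^c) * (∑ c ∈ range (k+1), (zz cs)^c)
      + (zz cs)^(k+2) * ((∑ c ∈ range (k+l-1), (zz cs)^c) * (∑ c ∈ range (k+l-1), (zz cs)^c))
    = (l : MonoidAlgebra ℚ W) * (∑ c ∈ range (k+1), (zz cs)^c)
      + (k : MonoidAlgebra ℚ W) * (∑ c ∈ range m, (zz cs)^c) := by
  rcases hl with rfl | rfl <;> subst hm
  · have hz := zz_m cs _ hM
    have h := congrArg (Polynomial.aeval (zz cs)) (polyA1 k)
    simp only [map_add, map_mul, map_pow, map_sub, map_one, Polynomial.aeval_X,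
      map_natCast, aeval_pG] at h
    rw [hz, sub_self, zero_mul, add_zero] at h
    simpa [Nat.cast_one, one_mul, Nat.add_sub_cancel] using h
  · have hz := zz_m cs _ hM
    have h := congrArg (Polynomial.aeval (zz cs)) (polyA2 k)
    simp only [map_add, map_mul, map_pow, map_sub, map_one, map_ofNat,
      Polynomial.aeval_X, map_natCast, aeval_pG] at h
    rw [hz, sub_self, zero_mul, add_zero] at h
    have hc2 : ((2:ℕ) : MonoidAlgebra ℚ W) = (2 : MonoidAlgebra ℚ W) := by norm_cast
    rw [show k+2-1 = k+1 from by omega, show 2*k+2 = 2*k+2 from rfl]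
    rw [hc2]
    convert h using 2 <;> norm_num
  
lemma algB (hl : l = 1 ∨ l = 2) (hm : m = 2*k+l) :
    (zz cs)^(k+l) * ((∑ c ∈ range (k+1), (zz cs)^c) * (∑ c ∈ range (k+l-1), (zz cs)^c))
      + (∑ c ∈ range (k+1), (zz cs)^c) * (∑ c ∈ range (k+l-1), (zz cs)^c)
    = (l : MonoidAlgebra ℚ W) * (∑ c ∈ range (k+l-1), (zz cs)^c)
      + (k : MonoidAlgebra ℚ W) * (∑ c ∈ range m, (zz cs)^c) := by
  rcases hl with rfl | rfl <;> subst hm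
  · have hz := zz_m cs _ hM
    have h := congrArg (Polynomial.aeval (zz cs)) (polyB1 k)
    simp only [map_add, map_mul, map_pow, map_sub, map_one, Polynomial.aeval_X,
      map_natCast, aeval_pG] at h
    rw [hz, sub_self, zero_mul, add_zero, add_mul, one_mul] at h
    simpa [Nat.cast_one, one_mul, Nat.add_sub_cancel] using h
  · have hz := zz_m cs _ hM
    have h := congrArg (Polynomial.aeval (zz cs)) (polyB2 k)
    simp only [map_add, map_mul, map_pow, map_sub, map_one, map_ofNat,
      Polynomial.aeval_X, map_natCast, aeval_pG] at h
    rw [hz, sub_self, zero_mul, add_zero, add_mul, one_mul] at h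
    have hc2 : ((2:ℕ) : MonoidAlgebra ℚ W) = (2 : MonoidAlgebra ℚ W) := by norm_cast
    rw [show k+2-1 = k+1 from by omega, hc2]
    convert h using 2 <;> norm_num

omit hM in
lemma BA_comm : (∑ c ∈ range (k+l-1), (zz cs)^c) * (∑ c ∈ range (k+1), (zz cs)^c)
    = (∑ c ∈ range (k+1), (zz cs)^c) * (∑ c ∈ range (k+l-1), (zz cs)^c) := by
  rw [← aeval_pG, ← aeval_pG, ← map_mul, ← map_mul, mul_comm]

lemma zzc_T {c : ℕ} (hc : c ≤ m) :
    (zz cs)^c * TT cs = TT cs * (zz cs)^(m - c) := by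
  rw [zz_pow, zz_pow, TT, MonoidAlgebra.single_mul_single, MonoidAlgebra.single_mul_single,
    one_mul, hqct cs m hM hc]

lemma sum_T {N e : ℕ} (hN : 1 ≤ N) (he : N - 1 + e = m) :
    (∑ c ∈ range N, (zz cs)^c) * TT cs = TT cs * ((zz cs)^e * (∑ c ∈ range N, (zz cs)^c)) := by
  rw [Finset.sum_mul]
  have h1 : ∀ c ∈ range N, (zz cs)^c * TT cs = TT cs * ((zz cs)^e * (zz cs)^(N-1-c)) := by
    intro c hc
    rw [Finset.mem_range] at hc
    rw [zzc_T cs m hM (by omega), ← pow_add, show m - c = e + (N-1-c) from by omega]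
  rw [Finset.sum_congr rfl h1, ← Finset.mul_sum]
  congr 1
  rw [← Finset.mul_sum]
  congr 1
  exact Finset.sum_range_reflect (fun c => (zz cs)^c) N

omit hM in
lemma ringlem {R : Type*} [Ring R] (a b t z1 z2 : R) (hat : a*t = t*(z1*a))
    (hbt : b*t = t*(z2*b)) (htt : t*t = 1) (hba : b*a = a*b) :
    (a + t*b)*(a + t*b) = (a*a + z2*(b*b)) + t*(z1*(a*b) + a*b) := by
  have h1 : a*(t*b) = t*(z1*(a*b)) := by
    rw [← mul_assoc, hat, mul_assoc, mul_assoc]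
  have h2 : (t*b)*a = t*(a*b) := by rw [mul_assoc, hba]
  have h3 : (t*b)*(t*b) = z2*(b*b) := by
    calc (t*b)*(t*b) = t*((b*t)*b) := by rw [mul_assoc, ← mul_assoc b t b]
      _ = t*((t*(z2*b))*b) := by rw [hbt]
      _ = (t*t)*(z2*(b*b)) := by simp only [mul_assoc]
      _ = z2*(b*b) := by rw [htt, one_mul]
  calc (a + t*b)*(a + t*b) = (a*a + a*(t*b)) + ((t*b)*a + (t*b)*(t*b)) := by
        rw [add_mul, mul_add, mul_add]
    _ = (a*a + t*(z1*(a*b))) + (t*(a*b) + z2*(b*b)) := by rw [h1, h2, h3]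
    _ = (a*a + z2*(b*b)) + t*(z1*(a*b) + a*b) := by rw [mul_add t]; abel

end main
end DNB
namespace DNB
open CoxeterSystem DihedralGroup Finset Polynomial

variable {W : Type*} [Group W] [Fintype W] {M : CoxeterMatrix (Fin 2)}
  (cs : CoxeterSystem M W) (m : ℕ)

section withfin
variable (hM : M 0 1 = m) (hm3 : 3 ≤ m)
include hM hm3

lemma xJ_eq : xCox cs {1} = ∑ n ∈ range m, MonoidAlgebra.single (aa cs n) (1:ℚ) := by
  rw [xCox]
  refine (Finset.sum_congr ?_ (fun _ _ => rfl)).trans (Finset.sum_image ?_)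
  · ext w
    simp only [Finset.mem_filter, Finset.mem_univ, true_and, Finset.mem_image,
      Finset.mem_range, Set.mem_singleton_iff]
    constructor
    · intro h
      obtain ⟨n, hn, he⟩ := (mem_X_iff cs m hM hm3 w).mp (h 1 rfl)
      exact ⟨n, hn, he.symm⟩
    · rintro ⟨n, hn, rfl⟩ t rfl
      exact (mem_X_iff cs m hM hm3 _).mpr ⟨n, hn, rfl⟩
  · intro n hn j hj h
    rw [Finset.mem_coe, Finset.mem_range] at hn hj
    exact comp_aa cs m hM hm3 (by omega) (by omega) h

omit hM hm3 in
lemma xE_eq : xCox cs ∅ = ∑ w ∈ univ, MonoidAlgebra.single w (1:ℚ) := by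
  rw [xCox]
  refine Finset.sum_congr ?_ (fun _ _ => rfl)
  ext w
  simp only [Finset.mem_filter, Finset.mem_univ, true_and, iff_true]
  intro t ht
  exact absurd ht (Set.notMem_empty t)

lemma xJ_split (k l : ℕ) (hl : l = 1 ∨ l = 2) (hm : m = 2*k+l) :
    xCox cs {1} = (∑ c ∈ range (k+1), (zz cs)^c)
      + TT cs * (∑ c ∈ range (k+l-1), (zz cs)^c) := by
  rw [xJ_eq cs m hM hm3, parity_split (fun n => MonoidAlgebra.single (aa cs n) (1:ℚ)) m]
  rw [show (m+1)/2 = k+1 from by omega, show m/2 = k+l-1 from by omega]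
  congr 1
  · refine Finset.sum_congr rfl (fun c _ => ?_)
    rw [aa_even, zz_pow]
  · rw [Finset.mul_sum]
    refine Finset.sum_congr rfl (fun c _ => ?_)
    rw [aa_odd, zz_pow, TT, MonoidAlgebra.single_mul_single, one_mul]

lemma xE_split :
    xCox cs ∅ = (∑ c ∈ range m, (zz cs)^c) + TT cs * (∑ c ∈ range m, (zz cs)^c) := by
  rw [xE_eq]
  have hbij : Function.Bijective (Sum.elim (fun i : Fin m => (qq cs)^(i:ℕ))
      (fun i : Fin m => tt cs * (qq cs)^(i:ℕ))) := by
    constructor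
    · rintro (⟨c,hc⟩|⟨c,hc⟩) (⟨d,hd⟩|⟨d,hd⟩) h <;>
        simp only [Sum.elim_inl, Sum.elim_inr] at h
      · exact congrArg Sum.inl (Fin.ext (inj_qq cs m hM hc hd h))
      · exact absurd h (ne_q_tq cs m hM c d)
      · exact absurd h.symm (ne_q_tq cs m hM d c)
      · exact congrArg Sum.inr (Fin.ext (inj_tqq cs m hM hc hd h))
    · intro w
      obtain ⟨c, hc, hcase | hcase⟩ := gen cs m hM (by omega) w
      · exact ⟨Sum.inl ⟨c, hc⟩, hcase.symm⟩
      · exact ⟨Sum.inr ⟨c, hc⟩, hcase.symm⟩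
  rw [← Function.Bijective.sum_comp hbij (fun w => MonoidAlgebra.single w (1:ℚ))]
  rw [Fintype.sum_sum_type]
  simp only [Sum.elim_inl, Sum.elim_inr]
  congr 1
  · rw [Fin.sum_univ_eq_sum_range (fun n => MonoidAlgebra.single ((qq cs)^n) (1:ℚ)) m]
    exact Finset.sum_congr rfl (fun c _ => (zz_pow cs c).symm)
  · rw [Fin.sum_univ_eq_sum_range (fun n => MonoidAlgebra.single (tt cs * (qq cs)^n) (1:ℚ)) m,
      Finset.mul_sum]
    refine Finset.sum_congr rfl (fun c _ => ?_)
    rw [zz_pow, TT, MonoidAlgebra.single_mul_single, one_mul]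

lemma main1 (k l : ℕ) (hk : 1 ≤ k) (hl : l = 1 ∨ l = 2) (hm : m = 2*k+l) :
    xCox cs {1} * xCox cs {1}
      = (l : MonoidAlgebra ℚ W) * xCox cs {1} + (k : MonoidAlgebra ℚ W) * xCox cs ∅ := by
  have hAT := sum_T cs m hM (N := k+1) (e := k+l) (by omega) (by omega)
  have hBT := sum_T cs m hM (N := k+l-1) (e := k+2) (by omega) (by omega)
  have hrl := ringlem (a := ∑ c ∈ range (k+1), (zz cs)^c)
    (b := ∑ c ∈ range (k+l-1), (zz cs)^c) (t := TT cs)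
    (z1 := (zz cs)^(k+l)) (z2 := (zz cs)^(k+2)) hAT hBT (TT_mul_TT cs) (BA_comm cs k l)
  rw [xJ_split cs m hM hm3 k l hl hm, xE_split cs m hM hm3, hrl,
    algA cs m k l hM hl hm, algB cs m k l hM hl hm]
  have hncomm : ∀ (n:ℕ) (y : MonoidAlgebra ℚ W),
      TT cs * ((n : MonoidAlgebra ℚ W) * y) = (n : MonoidAlgebra ℚ W) * (TT cs * y) :=
    fun n y => by rw [← mul_assoc, ← (Nat.cast_commute n (TT cs)).eq, mul_assoc]
  rw [mul_add (TT cs), hncomm, hncomm, mul_add, mul_add]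
  abel

end withfin
end DNB
namespace DNB
open CoxeterSystem DihedralGroup Finset Polynomial

variable {W : Type*} [Group W] [Fintype W] {M : CoxeterMatrix (Fin 2)}
  (cs : CoxeterSystem M W) (m : ℕ)

lemma fin3 (i : Fin 3) : i = 0 ∨ i = 1 ∨ i = 2 := by
  fin_cases i
  · exact Or.inl rfl
  · exact Or.inr (Or.inl rfl)
  · exact Or.inr (Or.inr rfl)

lemma single_mul_xE (w : W) :
    MonoidAlgebra.single w (1:ℚ) * xCox cs ∅ = xCox cs ∅ := by
  rw [xE_eq cs, Finset.mul_sum,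
    Finset.sum_congr rfl
      (fun v _ => by rw [MonoidAlgebra.single_mul_single, one_mul] :
        ∀ v ∈ univ, MonoidAlgebra.single w (1:ℚ) * MonoidAlgebra.single v 1
          = MonoidAlgebra.single (w * v) 1)]
  exact Fintype.sum_bijective (fun v => w * v) (Group.mulLeft_bijective w) _ _ (fun v => rfl)

lemma xE_mul_single (w : W) :
    xCox cs ∅ * MonoidAlgebra.single w (1:ℚ) = xCox cs ∅ := by
  rw [xE_eq cs, Finset.sum_mul,
    Finset.sum_congr rfl
      (fun v _ => by rw [MonoidAlgebra.single_mul_single, one_mul] :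
        ∀ v ∈ univ, MonoidAlgebra.single v (1:ℚ) * MonoidAlgebra.single w 1
          = MonoidAlgebra.single (v * w) 1)]
  exact Fintype.sum_bijective (fun v => v * w) (Group.mulRight_bijective w) _ _ (fun v => rfl)

section withhM
variable (hM : M 0 1 = m) (hm3 : 3 ≤ m)
include hM hm3

lemma xJ_mul_xE : xCox cs {1} * xCox cs ∅ = m • xCox cs ∅ := by
  rw [xJ_eq cs m hM hm3, Finset.sum_mul,
    Finset.sum_congr rfl (fun n _ => single_mul_xE cs (aa cs n)),
    Finset.sum_const, Finset.card_range]

lemma xE_mul_xJ : xCox cs ∅ * xCox cs {1} = m • xCox cs ∅ := by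
  rw [xJ_eq cs m hM hm3, Finset.mul_sum,
    Finset.sum_congr rfl (fun n _ => xE_mul_single cs (aa cs n)),
    Finset.sum_const, Finset.card_range]

omit hM hm3 in
lemma xE_mul_xE : xCox cs ∅ * xCox cs ∅ = (Fintype.card W) • xCox cs ∅ := by
  nth_rewrite 1 [xE_eq cs]
  rw [Finset.sum_mul,
    Finset.sum_congr rfl (fun w _ => single_mul_xE cs w),
    Finset.sum_const, Finset.card_univ]

end withhM
end DNB

/-- Let `m = 2k + l` with `k ≥ 1` and `l ∈ {1, 2}`, and let `W` be the dihedral Coxeter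
group `I₂(m)` with simple reflections `s₁ = simple 0`, `s₂ = simple 1`.  With `x_J` the
sum of the minimal-length coset representatives of `⟨s₂⟩` (so `J = {1}`) and `x_∅` the
sum of all elements of `W`:  `x_J² = l·x_J + k·x_∅`; consequently
`x_∅ = (-l/k)·x_J + (1/k)·x_J²` lies in `ℚ[x_J]`, and `{1, x_J, x_∅}` is a basis of
`ℚ[x_J]` contained in the standard descent algebra basis. -/
theorem dihedral_native_basis {W : Type*} [Group W] [Fintype W]
    (m k l : ℕ) (hk : 1 ≤ k) (hl : l = 1 ∨ l = 2) (hm : m = 2 * k + l)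
    (M : CoxeterMatrix (Fin 2)) (hM : M 0 1 = m)
    (cs : CoxeterSystem M W) :
    xCox cs {1} ^ 2 = (l : ℚ) • xCox cs {1} + (k : ℚ) • xCox cs ∅ ∧
    xCox cs ∅ = (-(l : ℚ) / k) • xCox cs {1} + ((1 : ℚ) / k) • xCox cs {1} ^ 2 ∧
    ∃ b : Module.Basis (Fin 3) ℚ (Algebra.adjoin ℚ {xCox cs {1}}),
      ((b 0 : Algebra.adjoin ℚ {xCox cs {1}}) : MonoidAlgebra ℚ W) = 1 ∧
      ((b 1 : Algebra.adjoin ℚ {xCox cs {1}}) : MonoidAlgebra ℚ W) = xCox cs {1} ∧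
      ((b 2 : Algebra.adjoin ℚ {xCox cs {1}}) : MonoidAlgebra ℚ W) = xCox cs ∅ := by
  have hm3 : 3 ≤ m := by omega
  have hk0 : (k:ℚ) ≠ 0 := Nat.cast_ne_zero.mpr (by omega)
  have hsm : ∀ (n:ℕ) (y : MonoidAlgebra ℚ W), (n : MonoidAlgebra ℚ W) * y = (n:ℚ) • y :=
    fun n y => by rw [← nsmul_eq_mul, Nat.cast_smul_eq_nsmul]
  have h1 : xCox cs {1} ^ 2 = (l : ℚ) • xCox cs {1} + (k : ℚ) • xCox cs ∅ := by
    rw [pow_two, DNB.main1 cs m hM hm3 k l hk hl hm, hsm, hsm]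
  have h2 : xCox cs ∅ = (-(l : ℚ) / k) • xCox cs {1} + ((1 : ℚ) / k) • xCox cs {1} ^ 2 := by
    rw [h1, smul_add, smul_smul, smul_smul, ← add_assoc, ← add_smul]
    have hc1 : (-(l:ℚ)/k) + (1/k)*l = 0 := by ring
    have hc2 : ((1:ℚ)/k)*k = 1 := by field_simp
    rw [hc1, hc2, zero_smul, zero_add, one_smul]
  refine ⟨h1, h2, ?_⟩
  set A := Algebra.adjoin ℚ {xCox cs {1}} with hA
  have hxx : xCox cs {1} * xCox cs {1} = (l:ℚ) • xCox cs {1} + (k:ℚ) • xCox cs ∅ := by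
    rw [← pow_two]; exact h1
  have hxe := DNB.xJ_mul_xE cs m hM hm3
  have hex := DNB.xE_mul_xJ cs m hM hm3
  have hee := DNB.xE_mul_xE cs
  set v : Fin 3 → MonoidAlgebra ℚ W := ![1, xCox cs {1}, xCox cs ∅] with hv
  have hv0 : v 0 = 1 := rfl
  have hv1 : v 1 = xCox cs {1} := rfl
  have hv2 : v 2 = xCox cs ∅ := rfl
  set p : Submodule ℚ (MonoidAlgebra ℚ W) := Submodule.span ℚ (Set.range v) with hp
  have h1p : (1:MonoidAlgebra ℚ W) ∈ p := Submodule.subset_span ⟨0, rfl⟩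
  have hxp : xCox cs {1} ∈ p := Submodule.subset_span ⟨1, rfl⟩
  have hep : xCox cs ∅ ∈ p := Submodule.subset_span ⟨2, rfl⟩
  have hgenmul : ∀ i j : Fin 3, v i * v j ∈ p := by
    intro i j
    rcases DNB.fin3 i with rfl | rfl | rfl <;> rcases DNB.fin3 j with rfl | rfl | rfl
    · rw [hv0, one_mul]; exact h1p
    · rw [hv0, one_mul]; exact hxp
    · rw [hv0, one_mul]; exact hep
    · rw [hv0, hv1, mul_one]; exact hxp
    · rw [hv1, hxx]; exact add_mem (p.smul_mem _ hxp) (p.smul_mem _ hep)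
    · rw [hv1, hv2, hxe]; exact nsmul_mem hep m
    · rw [hv0, hv2, mul_one]; exact hep
    · rw [hv1, hv2, hex]; exact nsmul_mem hep m
    · rw [hv2, hee]; exact nsmul_mem hep _
  have hmulclosed : ∀ a ∈ p, ∀ b ∈ p, a * b ∈ p := by
    have key : ∀ i : Fin 3, ∀ b ∈ p, v i * b ∈ p := by
      intro i b hb
      refine Submodule.span_induction ?_ ?_ ?_ ?_ hb
      · rintro y ⟨j, rfl⟩; exact hgenmul i j
      · rw [mul_zero]; exact p.zero_mem
      · intro y z _ _ hy hz; rw [mul_add]; exact p.add_mem hy hz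
      · intro c y _ hy; rw [mul_smul_comm]; exact p.smul_mem c hy
    intro a ha b hb
    refine Submodule.span_induction ?_ ?_ ?_ ?_ ha
    · rintro y ⟨i, rfl⟩; exact key i b hb
    · rw [zero_mul]; exact p.zero_mem
    · intro y z _ _ hy hz; rw [add_mul]; exact p.add_mem hy hz
    · intro c y _ hy; rw [smul_mul_assoc]; exact p.smul_mem c hy
  have hadj : ∀ y : A, (y : MonoidAlgebra ℚ W) ∈ p := by
    intro y
    have hle : A ≤ p.toSubalgebra h1p (fun a b ha hb => hmulclosed a ha b hb) := by
      rw [hA]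
      apply Algebra.adjoin_le
      intro z hz
      rw [Set.mem_singleton_iff] at hz
      subst hz
      exact hxp
    exact hle y.2
  have hxad : xCox cs {1} ∈ A := Algebra.self_mem_adjoin_singleton ℚ _
  have head : xCox cs ∅ ∈ A := by
    rw [h2]
    exact add_mem (A.smul_mem hxad _) (A.smul_mem (pow_mem hxad 2) _)
  set u : Fin 3 → A := ![⟨1, one_mem _⟩, ⟨xCox cs {1}, hxad⟩, ⟨xCox cs ∅, head⟩] with hu
  have hucoe : ∀ i, (u i : MonoidAlgebra ℚ W) = v i := by
    intro i; fin_cases i <;> rfl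
  -- linear independence
  have hli0 : LinearIndependent ℚ v := by
    rw [Fintype.linearIndependent_iff]
    intro g hg
    rw [Fin.sum_univ_three, hv0, hv1, hv2] at hg
    have hx' := DNB.xJ_eq cs m hM hm3
    have he' := DNB.xE_eq cs
    have happ : ∀ w : W, g 0 * ((1 : MonoidAlgebra ℚ W).coeff w)
        + g 1 * ((xCox cs {1}).coeff w) + g 2 * ((xCox cs ∅).coeff w) = 0 := by
      intro w
      have hcg := congrArg (fun f : MonoidAlgebra ℚ W => f.coeff w) hg
      simpa [Finsupp.add_apply, Finsupp.smul_apply, smul_eq_mul] using hcg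
    have hxapp : ∀ w : W, (xCox cs {1}).coeff w
        = ∑ n ∈ Finset.range m, (if DNB.aa cs n = w then (1:ℚ) else 0) := by
      intro w
      rw [hx', MonoidAlgebra.coeff_sum, Finset.sum_apply']
      exact Finset.sum_congr rfl (fun n _ => MonoidAlgebra.single_apply)
    have heapp : ∀ w : W, (xCox cs ∅).coeff w = 1 := by
      intro w
      rw [he', MonoidAlgebra.coeff_sum, Finset.sum_apply',
        Finset.sum_congr rfl (fun v _ => MonoidAlgebra.single_apply :
          ∀ v ∈ Finset.univ, (MonoidAlgebra.single v (1:ℚ)).coeff w = if v = w then 1 else 0),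
        Finset.sum_ite_eq' Finset.univ w (fun _ => (1:ℚ))]
      simp
    have honeapp : ∀ w : W, (1 : MonoidAlgebra ℚ W).coeff w = (if (1:W) = w then (1:ℚ) else 0) := by
      intro w
      rw [MonoidAlgebra.one_def]
      exact MonoidAlgebra.single_apply
    have hg2 : g 2 = 0 := by
      have h := happ (DNB.aa cs m)
      rw [honeapp, hxapp, heapp] at h
      rw [if_neg (fun hcon => by
        have h00 : DNB.aa cs 0 = DNB.aa cs m := by rw [DNB.aa0]; exact hcon
        have := DNB.comp_aa cs m hM hm3 (by omega) (le_refl m) h00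
        omega)] at h
      rw [Finset.sum_eq_zero (fun n hn => if_neg (fun hcon => by
        rw [Finset.mem_range] at hn
        have := DNB.comp_aa cs m hM hm3 (by omega) (le_refl m) hcon
        omega))] at h
      simpa using h
    have hg1 : g 1 = 0 := by
      have h := happ (DNB.aa cs 1)
      rw [honeapp, hxapp, heapp] at h
      rw [if_neg (fun hcon => by
        have h00 : DNB.aa cs 0 = DNB.aa cs 1 := by rw [DNB.aa0]; exact hcon
        have := DNB.comp_aa cs m hM hm3 (by omega) (by omega) h00
        omega)] at h
      rw [Finset.sum_eq_single_of_mem 1 (Finset.mem_range.mpr (by omega))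
        (fun n hn hne => if_neg (fun hcon => by
          rw [Finset.mem_range] at hn
          have := DNB.comp_aa cs m hM hm3 (by omega) (by omega) hcon
          omega))] at h
      rw [if_pos rfl, hg2] at h
      linarith
    have hg0 : g 0 = 0 := by
      have h := happ 1
      rw [honeapp, hxapp, heapp, if_pos rfl] at h
      rw [Finset.sum_eq_single_of_mem 0 (Finset.mem_range.mpr (by omega))
        (fun n hn hne => if_neg (fun hcon => hne (by
          rw [Finset.mem_range] at hn
          have h00 : DNB.aa cs n = DNB.aa cs 0 := by rw [DNB.aa0]; exact hcon
          have := DNB.comp_aa cs m hM hm3 (by omega) (by omega) h00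
          omega)))] at h
      rw [if_pos (DNB.aa0 cs), hg1, hg2] at h
      linarith
    intro i
    fin_cases i
    · exact hg0
    · exact hg1
    · exact hg2
  have hli : LinearIndependent ℚ u := by
    apply LinearIndependent.of_comp A.val.toLinearMap
    have hcomp : (A.val.toLinearMap ∘ u) = v := funext (fun i => hucoe i)
    rw [hcomp]
    exact hli0
  have hsp : ⊤ ≤ Submodule.span ℚ (Set.range u) := by
    intro y _
    have hyp := hadj y
    rw [hp, Submodule.mem_span_range_iff_exists_fun] at hyp
    rw [Submodule.mem_span_range_iff_exists_fun]
    obtain ⟨c, hc⟩ := hyp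
    refine ⟨c, ?_⟩
    apply Subtype.ext
    rw [← hc]
    rw [AddSubmonoidClass.coe_finset_sum]
    exact Finset.sum_congr rfl (fun i _ => by rw [SetLike.val_smul, hucoe])
  refine ⟨Module.Basis.mk hli hsp, ?_, ?_, ?_⟩
  · rw [Module.Basis.mk_apply]; rfl
  · rw [Module.Basis.mk_apply]; rfl
  · rw [Module.Basis.mk_apply]; rfl
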